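/- Let p > 1 and δ ≥ 0, and set φ(t) = ∫₀ᵗ (δ+s)^{p-2} s ds with Fenchel conjugate φ*(t) = sup_{s≥0}(st − φ(s)). Then there exist constants c, C > 0 depending only on p such that for all t ≥ 0: c·(δ^{p-1} + t)^{p'-2} t² ≤ φ*(t) ≤ C·(δ^{p-1} + t)^{p'-2} t², where p' = p/(p−1). -/

import Mathlib

open Real Set
set_option maxHeartbeats 1000000


/-- `φ(t) = ∫₀ᵗ (δ+s)^(p-2) s ds`. -/
noncomputable def phiFn (p δ t : ℝ) : ℝ :=
  ∫ s in (0:ℝ)..t, (δ + s) ^ (p - 2) * s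

/-- The Fenchel conjugate `ψ*(t) = sup_{s ≥ 0} (s t − ψ s)`. -/
noncomputable def fconj (ψ : ℝ → ℝ) (t : ℝ) : ℝ :=
  sSup ((fun s => s * t - ψ s) '' Set.Ici 0)

noncomputable def gFn (p δ s : ℝ) : ℝ := (δ + s) ^ (p - 2) * s

lemma gFn_nonneg (p δ : ℝ) (hδ : 0 ≤ δ) {s : ℝ} (hs : 0 ≤ s) : 0 ≤ gFn p δ s :=
  mul_nonneg (Real.rpow_nonneg (by linarith) _) hs

lemma gFn_eq (p δ : ℝ) (hδ : 0 ≤ δ) {s : ℝ} (hs : 0 ≤ s) :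
    gFn p δ s = (δ + s) ^ (p - 1) * (s / (δ + s)) := by
  rcases (add_nonneg hδ hs).eq_or_lt with h | h
  · have hs0 : s = 0 := le_antisymm (by linarith) hs
    simp [gFn, hs0]
  · rw [show p - 1 = (p - 2) + 1 by ring, Real.rpow_add h, Real.rpow_one]
    field_simp [gFn]
    unfold gFn; ring

lemma gFn_mono (p δ : ℝ) (hp : 1 < p) (hδ : 0 ≤ δ) {a b : ℝ} (ha : 0 ≤ a) (hab : a ≤ b) :
    gFn p δ a ≤ gFn p δ b := by
  have hb : 0 ≤ b := ha.trans hab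
  rw [gFn_eq p δ hδ ha, gFn_eq p δ hδ hb]
  rcases (add_nonneg hδ hb).eq_or_lt with h | h
  · have ha0 : a = 0 := le_antisymm (by linarith) ha
    have hb0 : b = 0 := le_antisymm (by linarith) hb
    rw [ha0, hb0]
  · apply mul_le_mul
    · exact Real.rpow_le_rpow (by linarith) (by linarith) (by linarith)
    · rcases (add_nonneg hδ ha).eq_or_lt with h2 | h2
      · have ha0 : a = 0 := le_antisymm (by linarith) ha
        simp [ha0]
        positivity
      · rw [div_le_div_iff₀ h2 h]
        nlinarith
    · positivity
    · exact Real.rpow_nonneg (by linarith) _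

lemma gFn_intble (p δ : ℝ) (hp : 1 < p) (hδ : 0 ≤ δ) {a b : ℝ} (ha : 0 ≤ a) (hab : a ≤ b) :
    IntervalIntegrable (gFn p δ) MeasureTheory.volume a b := by
  apply MonotoneOn.intervalIntegrable
  intro x hx y hy hxy
  rw [uIcc_of_le hab] at hx hy
  exact gFn_mono p δ hp hδ (ha.trans hx.1) hxy

lemma phiFn_eq (p δ t : ℝ) : phiFn p δ t = ∫ s in (0:ℝ)..t, gFn p δ s := rfl

lemma phiFn_nonneg (p δ : ℝ) (hδ : 0 ≤ δ) {t : ℝ} (ht : 0 ≤ t) : 0 ≤ phiFn p δ t := by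
  rw [phiFn_eq]
  apply intervalIntegral.integral_nonneg ht
  exact fun u hu => gFn_nonneg p δ hδ hu.1

lemma phiFn_le (p δ : ℝ) (hp : 1 < p) (hδ : 0 ≤ δ) {t : ℝ} (ht : 0 ≤ t) :
    phiFn p δ t ≤ gFn p δ t * t := by
  rw [phiFn_eq]
  have h : (∫ s in (0:ℝ)..t, gFn p δ s) ≤ ∫ _s in (0:ℝ)..t, gFn p δ t := by
    apply intervalIntegral.integral_mono_on ht (gFn_intble p δ hp hδ le_rfl ht)
      intervalIntegrable_const
    exact fun x hx => gFn_mono p δ hp hδ hx.1 hx.2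
  simpa [mul_comm] using h

lemma phiFn_ge (p δ : ℝ) (hp : 1 < p) (hδ : 0 ≤ δ) {t : ℝ} (ht : 0 ≤ t) :
    gFn p δ (t/2) * (t/2) ≤ phiFn p δ t := by
  have h1 : IntervalIntegrable (gFn p δ) MeasureTheory.volume 0 (t/2) :=
    gFn_intble p δ hp hδ le_rfl (by linarith)
  have h2 : IntervalIntegrable (gFn p δ) MeasureTheory.volume (t/2) t :=
    gFn_intble p δ hp hδ (by linarith) (by linarith)
  rw [phiFn_eq, ← intervalIntegral.integral_add_adjacent_intervals h1 h2]
  have hA : 0 ≤ ∫ s in (0:ℝ)..(t/2), gFn p δ s :=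
    intervalIntegral.integral_nonneg (by linarith) (fun u hu => gFn_nonneg p δ hδ hu.1)
  have hB : gFn p δ (t/2) * (t/2) ≤ ∫ s in (t/2)..t, gFn p δ s := by
    have h : (∫ _s in (t/2)..t, gFn p δ (t/2)) ≤ ∫ s in (t/2)..t, gFn p δ s := by
      apply intervalIntegral.integral_mono_on (by linarith) intervalIntegrable_const h2
      exact fun x hx => gFn_mono p δ hp hδ (by linarith) hx.1
    have : (∫ _s in (t/2)..t, gFn p δ (t/2)) = gFn p δ (t/2) * (t/2) := by
      simp [intervalIntegral.integral_const]
      ring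
    linarith
  linarith

set_option maxHeartbeats 1000000

noncomputable def kap (p : ℝ) : ℝ := min 1 ((2:ℝ) ^ (2 - p)) / 4
noncomputable def Mc (p : ℝ) : ℝ :=
  max 2 (max (4 / kap p) (((2:ℝ) ^ p / kap p) ^ (1 / (p - 1))))

lemma kap_pos (p : ℝ) : 0 < kap p := by
  have : (0:ℝ) < (2:ℝ) ^ (2 - p) := Real.rpow_pos_of_pos (by norm_num) _
  unfold kap
  have : (0:ℝ) < min 1 ((2:ℝ) ^ (2 - p)) := lt_min one_pos this
  linarith

lemma kap_le (p : ℝ) : kap p ≤ 1 / 4 := by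
  unfold kap
  have : min 1 ((2:ℝ) ^ (2 - p)) ≤ 1 := min_le_left _ _
  linarith

lemma Mc_ge_two (p : ℝ) : 2 ≤ Mc p := le_max_left _ _

lemma Mc_ge_four_div (p : ℝ) : 4 / kap p ≤ Mc p :=
  le_trans (le_max_left _ _) (le_max_right _ _)

lemma Mc_pos (p : ℝ) : 0 < Mc p := lt_of_lt_of_le (by norm_num) (Mc_ge_two p)

lemma Mc_rpow (p : ℝ) (hp : 1 < p) : (2:ℝ) ^ p / kap p ≤ Mc p ^ (p - 1) := by
  have h0 : (0:ℝ) < 2 ^ p / kap p := by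
    have := kap_pos p
    have : (0:ℝ) < (2:ℝ) ^ p := Real.rpow_pos_of_pos (by norm_num) _
    positivity
  have h1 : ((2:ℝ) ^ p / kap p) ^ (1 / (p - 1)) ≤ Mc p :=
    le_trans (le_max_right _ _) (le_max_right _ _)
  calc (2:ℝ) ^ p / kap p = (((2:ℝ) ^ p / kap p) ^ (1 / (p - 1))) ^ (p - 1) := by
        rw [← Real.rpow_mul h0.le, one_div_mul_cancel (by linarith : p - 1 ≠ 0), Real.rpow_one]
    _ ≤ Mc p ^ (p - 1) :=
        Real.rpow_le_rpow (Real.rpow_nonneg h0.le _) h1 (by linarith)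

lemma two_rpow_cancel (p : ℝ) : (2:ℝ) ^ p * (2:ℝ) ^ (2 - p) = 4 := by
  rw [← Real.rpow_add (by norm_num : (0:ℝ) < 2)]
  norm_num

lemma rpow_split (p s : ℝ) (hs : 0 < s) : s ^ (p - 1) = s ^ (p - 2) * s := by
  rw [show p - 1 = (p - 2) + 1 by ring, Real.rpow_add_one hs.ne']

lemma key_ineq (p δ : ℝ) (hp : 1 < p) (hδ : 0 ≤ δ) {t s : ℝ} (ht : 0 < t)
    (hs : Mc p * (δ ^ (p - 1) + t) ^ (p / (p - 1) - 2) * t ≤ s) :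
    t ≤ kap p * ((δ + s) ^ (p - 2) * s) := by
  have hp1 : (0:ℝ) < p - 1 := by linarith
  have hκ := kap_pos p
  have hM0 := Mc_pos p
  have hδp : (0:ℝ) ≤ δ ^ (p - 1) := Real.rpow_nonneg hδ _
  set τ := δ ^ (p - 1) + t with hτdef
  have hτ : 0 < τ := by linarith
  have hτq : (0:ℝ) < τ ^ (p / (p - 1) - 2) := Real.rpow_pos_of_pos hτ _
  have hs0 : 0 < s := lt_of_lt_of_le (mul_pos (mul_pos hM0 hτq) ht) hs
  have hqe : (p / (p - 1) - 2) * (p - 1) = 2 - p := by field_simp; ring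
  have hq2eq : p / (p - 1) - 2 = (2 - p) / (p - 1) := by field_simp; ring
  -- s^(p-1) ≥ Mc^(p-1) * τ^(2-p) * t^(p-1)
  have hsp : Mc p ^ (p - 1) * (τ ^ (2 - p) * t ^ (p - 1)) ≤ s ^ (p - 1) := by
    have h1 : (Mc p * τ ^ (p / (p - 1) - 2) * t) ^ (p - 1) ≤ s ^ (p - 1) :=
      Real.rpow_le_rpow (mul_nonneg (mul_nonneg hM0.le hτq.le) ht.le) hs (by linarith)
    calc Mc p ^ (p - 1) * (τ ^ (2 - p) * t ^ (p - 1))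
        = Mc p ^ (p - 1) * ((τ ^ (p / (p - 1) - 2)) ^ (p - 1) * t ^ (p - 1)) := by
          rw [← Real.rpow_mul hτ.le, hqe]
      _ = (Mc p * τ ^ (p / (p - 1) - 2) * t) ^ (p - 1) := by
          rw [Real.mul_rpow (mul_nonneg hM0.le hτq.le) ht.le,
            Real.mul_rpow hM0.le hτq.le]
          ring
      _ ≤ s ^ (p - 1) := h1
  rw [← div_le_iff₀' hκ]
  have htt : t ^ (2 - p) * t ^ (p - 1) = t := by
    rw [← Real.rpow_add ht]; norm_num
  rcases le_total p 2 with hp2 | hp2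
  · -- 1 < p ≤ 2
    have h2 : (0:ℝ) ≤ 2 - p := by linarith
    have hq20 : (0:ℝ) ≤ p / (p - 1) - 2 := by rw [hq2eq]; positivity
    have hhalf : (1:ℝ)/2 ≤ (2:ℝ) ^ (p - 2) := by
      calc (1:ℝ)/2 = (2:ℝ) ^ (-1 : ℝ) := by rw [Real.rpow_neg_one]; norm_num
        _ ≤ (2:ℝ) ^ (p - 2) := Real.rpow_le_rpow_of_exponent_le (by norm_num) (by linarith)
    rcases le_total s δ with hsδ | hδs
    · -- s ≤ δ
      have hδ0 : 0 < δ := lt_of_lt_of_le hs0 hsδ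
      have hδpp : (0:ℝ) < δ ^ (p - 1) := Real.rpow_pos_of_pos hδ0 _
      have hb1 : (2:ℝ) ^ (p - 2) * δ ^ (p - 2) ≤ (δ + s) ^ (p - 2) := by
        rw [← Real.mul_rpow (by norm_num) hδ0.le]
        exact Real.rpow_le_rpow_of_nonpos (by linarith) (by linarith) (by linarith)
      rcases le_total t (δ ^ (p - 1)) with hcase | hcase
      · -- t ≤ δ^(p-1)
        have hτδ : δ ^ (2 - p) ≤ τ ^ (p / (p - 1) - 2) := by
          calc δ ^ (2 - p) = (δ ^ (p - 1)) ^ (p / (p - 1) - 2) := by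
                rw [← Real.rpow_mul hδ0.le,
                  show (p - 1) * (p / (p - 1) - 2) = 2 - p from by linear_combination hqe]
            _ ≤ τ ^ (p / (p - 1) - 2) := Real.rpow_le_rpow hδpp.le (by linarith) hq20
        have hδcancel : δ ^ (p - 2) * δ ^ (2 - p) = 1 := by
          rw [← Real.rpow_add hδ0]; norm_num
        have hMκ : (4:ℝ) ≤ Mc p * kap p := by
          have := Mc_ge_four_div p
          rw [div_le_iff₀ hκ] at this; linarith
        have hs2 : Mc p * (δ ^ (2 - p) * t) ≤ s := by
          calc Mc p * (δ ^ (2 - p) * t) ≤ Mc p * (τ ^ (p / (p - 1) - 2) * t) := by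
                have := mul_le_mul_of_nonneg_right hτδ ht.le
                exact mul_le_mul_of_nonneg_left this hM0.le
            _ = Mc p * τ ^ (p / (p - 1) - 2) * t := by ring
            _ ≤ s := hs
        calc t / kap p ≤ (Mc p / 2) * t := by
              rw [div_le_iff₀ hκ]
              nlinarith [mul_le_mul_of_nonneg_right hMκ ht.le]
          _ = (1/2) * δ ^ (p - 2) * (Mc p * (δ ^ (2 - p) * t)) := by
              rw [show (1/2 : ℝ) * δ ^ (p - 2) * (Mc p * (δ ^ (2 - p) * t))
                  = (Mc p / 2) * (δ ^ (p - 2) * δ ^ (2 - p)) * t from by ring, hδcancel,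
                mul_one]
          _ ≤ (1/2) * δ ^ (p - 2) * s := by
              have h0 : (0:ℝ) ≤ (1/2) * δ ^ (p - 2) :=
                mul_nonneg (by norm_num) (Real.rpow_nonneg hδ0.le _)
              exact mul_le_mul_of_nonneg_left hs2 h0
          _ ≤ (δ + s) ^ (p - 2) * s := by
              apply mul_le_mul_of_nonneg_right _ hs0.le
              calc (1/2 : ℝ) * δ ^ (p - 2) ≤ (2:ℝ) ^ (p - 2) * δ ^ (p - 2) :=
                    mul_le_mul_of_nonneg_right hhalf (Real.rpow_nonneg hδ0.le _)
                _ ≤ (δ + s) ^ (p - 2) := hb1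
      · -- δ^(p-1) ≤ t : contradiction
        exfalso
        have hδ1 : δ ≤ t ^ (1 / (p - 1)) := by
          calc δ = (δ ^ (p - 1)) ^ (1 / (p - 1)) := by
                rw [← Real.rpow_mul hδ0.le, mul_one_div_cancel (by linarith : p - 1 ≠ 0),
                  Real.rpow_one]
            _ ≤ t ^ (1 / (p - 1)) := Real.rpow_le_rpow hδpp.le hcase (by positivity)
        have ht1 : t ^ (p / (p - 1) - 2) * t = t ^ (1 / (p - 1)) := by
          rw [← Real.rpow_add_one ht.ne']
          congr 1; field_simp; ring
        have hs3 : Mc p * t ^ (1 / (p - 1)) ≤ s := by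
          calc Mc p * t ^ (1 / (p - 1)) = Mc p * (t ^ (p / (p - 1) - 2) * t) := by rw [ht1]
            _ ≤ Mc p * (τ ^ (p / (p - 1) - 2) * t) := by
                apply mul_le_mul_of_nonneg_left _ hM0.le
                exact mul_le_mul_of_nonneg_right
                  (Real.rpow_le_rpow ht.le (by linarith) hq20) ht.le
            _ = Mc p * τ ^ (p / (p - 1) - 2) * t := by ring
            _ ≤ s := hs
        have hM2 := Mc_ge_two p
        have hδ0 : 0 < δ := lt_of_lt_of_le hs0 hsδ
        nlinarith [Real.rpow_pos_of_pos ht (1 / (p - 1))]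
    · -- δ ≤ s
      have hb2 : (2:ℝ) ^ (p - 2) * s ^ (p - 2) ≤ (δ + s) ^ (p - 2) := by
        rw [← Real.mul_rpow (by norm_num) hs0.le]
        exact Real.rpow_le_rpow_of_nonpos (by linarith) (by linarith) (by linarith)
      have hMκ : (2:ℝ) / kap p ≤ Mc p ^ (p - 1) := by
        calc (2:ℝ) / kap p ≤ 2 ^ p / kap p := by
              have h2p : (2:ℝ) ≤ 2 ^ p := by
                calc (2:ℝ) = 2 ^ (1:ℝ) := (Real.rpow_one 2).symm
                  _ ≤ 2 ^ p := Real.rpow_le_rpow_of_exponent_le (by norm_num) (by linarith)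
              gcongr
          _ ≤ Mc p ^ (p - 1) := Mc_rpow p hp
      have hττ : t ^ (2 - p) ≤ τ ^ (2 - p) := Real.rpow_le_rpow ht.le (by linarith) h2
      calc t / kap p ≤ (Mc p ^ (p - 1) / 2) * t := by
            rw [div_le_iff₀ hκ]
            have h' : (2:ℝ) ≤ Mc p ^ (p - 1) * kap p := by
              rw [div_le_iff₀ hκ] at hMκ; linarith
            nlinarith [mul_le_mul_of_nonneg_right h' ht.le]
        _ = (1/2) * (Mc p ^ (p - 1) * (t ^ (2 - p) * t ^ (p - 1))) := by rw [htt]; ring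
        _ ≤ (1/2) * (Mc p ^ (p - 1) * (τ ^ (2 - p) * t ^ (p - 1))) := by
            apply mul_le_mul_of_nonneg_left _ (by norm_num)
            apply mul_le_mul_of_nonneg_left _ (Real.rpow_nonneg hM0.le _)
            exact mul_le_mul_of_nonneg_right hττ (Real.rpow_nonneg ht.le _)
        _ ≤ (1/2) * s ^ (p - 1) := mul_le_mul_of_nonneg_left hsp (by norm_num)
        _ = ((1/2) * s ^ (p - 2)) * s := by rw [rpow_split p s hs0]; ring
        _ ≤ (δ + s) ^ (p - 2) * s := by
            apply mul_le_mul_of_nonneg_right _ hs0.le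
            calc (1/2 : ℝ) * s ^ (p - 2) ≤ (2:ℝ) ^ (p - 2) * s ^ (p - 2) :=
                  mul_le_mul_of_nonneg_right hhalf (Real.rpow_nonneg hs0.le _)
              _ ≤ (δ + s) ^ (p - 2) := hb2
  · -- 2 ≤ p
    have h2 : (2:ℝ) - p ≤ 0 := by linarith
    have hq2le : p / (p - 1) - 2 ≤ 0 := by
      rw [hq2eq]; exact div_nonpos_iff.mpr (Or.inr ⟨by linarith, by linarith⟩)
    rcases le_total t (δ ^ (p - 1)) with hcase | hcase
    · -- t ≤ δ^(p-1)
      have hδ0 : 0 < δ := by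
        rcases hδ.eq_or_lt with h | h
        · exfalso
          rw [← h, Real.zero_rpow (by linarith : p - 1 ≠ 0)] at hcase; linarith
        · exact h
      have hδpp : (0:ℝ) < δ ^ (p - 1) := Real.rpow_pos_of_pos hδ0 _
      have hb1 : δ ^ (p - 2) ≤ (δ + s) ^ (p - 2) :=
        Real.rpow_le_rpow hδ0.le (by linarith) (by linarith)
      have hqm1 : (-1:ℝ) ≤ p / (p - 1) - 2 := by
        rw [hq2eq, le_div_iff₀ hp1]; linarith
      have hτδ : (1/2 : ℝ) * δ ^ (2 - p) ≤ τ ^ (p / (p - 1) - 2) := by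
        calc (1/2 : ℝ) * δ ^ (2 - p) ≤ (2:ℝ) ^ (p / (p - 1) - 2) * δ ^ (2 - p) := by
              apply mul_le_mul_of_nonneg_right _ (Real.rpow_nonneg hδ0.le _)
              calc (1/2 : ℝ) = (2:ℝ) ^ (-1 : ℝ) := by rw [Real.rpow_neg_one]; norm_num
                _ ≤ (2:ℝ) ^ (p / (p - 1) - 2) :=
                    Real.rpow_le_rpow_of_exponent_le (by norm_num) hqm1
          _ = (2 * δ ^ (p - 1)) ^ (p / (p - 1) - 2) := by
              rw [Real.mul_rpow (by norm_num) hδpp.le, ← Real.rpow_mul hδ0.le,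
                show (p - 1) * (p / (p - 1) - 2) = 2 - p from by linear_combination hqe]
          _ ≤ τ ^ (p / (p - 1) - 2) :=
              Real.rpow_le_rpow_of_nonpos hτ (by linarith) hq2le
      have hδcancel : δ ^ (p - 2) * δ ^ (2 - p) = 1 := by
        rw [← Real.rpow_add hδ0]; norm_num
      have hMκ : (4:ℝ) ≤ Mc p * kap p := by
        have := Mc_ge_four_div p
        rw [div_le_iff₀ hκ] at this; linarith
      have hs2 : Mc p * ((1/2) * δ ^ (2 - p) * t) ≤ s := by
        calc Mc p * ((1/2) * δ ^ (2 - p) * t) ≤ Mc p * (τ ^ (p / (p - 1) - 2) * t) := by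
              apply mul_le_mul_of_nonneg_left _ hM0.le
              exact mul_le_mul_of_nonneg_right hτδ ht.le
          _ = Mc p * τ ^ (p / (p - 1) - 2) * t := by ring
          _ ≤ s := hs
      calc t / kap p ≤ (Mc p / 4) * t := by
            rw [div_le_iff₀ hκ]
            nlinarith [mul_le_mul_of_nonneg_right hMκ ht.le]
        _ = (1/2) * δ ^ (p - 2) * (Mc p * ((1/2) * δ ^ (2 - p) * t)) := by
            rw [show (1/2 : ℝ) * δ ^ (p - 2) * (Mc p * ((1/2) * δ ^ (2 - p) * t))
                = (Mc p / 4) * (δ ^ (p - 2) * δ ^ (2 - p)) * t from by ring, hδcancel,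
              mul_one]
        _ ≤ (1/2) * δ ^ (p - 2) * s := by
            exact mul_le_mul_of_nonneg_left hs2
              (mul_nonneg (by norm_num) (Real.rpow_nonneg hδ0.le _))
        _ ≤ (δ + s) ^ (p - 2) * s := by
            apply mul_le_mul_of_nonneg_right _ hs0.le
            calc (1/2 : ℝ) * δ ^ (p - 2) ≤ 1 * δ ^ (p - 2) := by
                  apply mul_le_mul_of_nonneg_right (by norm_num) (Real.rpow_nonneg hδ0.le _)
              _ = δ ^ (p - 2) := one_mul _
              _ ≤ (δ + s) ^ (p - 2) := hb1
    · -- δ^(p-1) ≤ t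
      have hb1 : s ^ (p - 2) ≤ (δ + s) ^ (p - 2) :=
        Real.rpow_le_rpow hs0.le (by linarith) (by linarith)
      have hτ2 : (2:ℝ) ^ (2 - p) * t ^ (2 - p) ≤ τ ^ (2 - p) := by
        rw [← Real.mul_rpow (by norm_num) ht.le]
        exact Real.rpow_le_rpow_of_nonpos hτ (by linarith) h2
      have h4 := two_rpow_cancel p
      calc t / kap p
          = (1/4) * ((2 ^ p / kap p) * ((2:ℝ) ^ (2 - p) * (t ^ (2 - p) * t ^ (p - 1)))) := by
            rw [htt]; field_simp; linear_combination -h4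
        _ ≤ (1/4) * (Mc p ^ (p - 1) * ((2:ℝ) ^ (2 - p) * (t ^ (2 - p) * t ^ (p - 1)))) := by
            apply mul_le_mul_of_nonneg_left _ (by norm_num)
            apply mul_le_mul_of_nonneg_right (Mc_rpow p hp)
            have := Real.rpow_nonneg (show (0:ℝ) ≤ 2 by norm_num) (2 - p)
            have h1 : (0:ℝ) ≤ t ^ (2-p) * t ^ (p-1) :=
              mul_nonneg (Real.rpow_nonneg ht.le _) (Real.rpow_nonneg ht.le _)
            positivity
        _ ≤ (1/4) * (Mc p ^ (p - 1) * (τ ^ (2 - p) * t ^ (p - 1))) := by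
            apply mul_le_mul_of_nonneg_left _ (by norm_num)
            apply mul_le_mul_of_nonneg_left _ (Real.rpow_nonneg hM0.le _)
            calc (2:ℝ) ^ (2 - p) * (t ^ (2 - p) * t ^ (p - 1))
                = ((2:ℝ) ^ (2 - p) * t ^ (2 - p)) * t ^ (p - 1) := by ring
              _ ≤ τ ^ (2 - p) * t ^ (p - 1) :=
                  mul_le_mul_of_nonneg_right hτ2 (Real.rpow_nonneg ht.le _)
        _ ≤ (1/4) * s ^ (p - 1) := mul_le_mul_of_nonneg_left hsp (by norm_num)
        _ ≤ s ^ (p - 2) * s := by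
            rw [← rpow_split p s hs0]
            nlinarith [Real.rpow_nonneg hs0.le (p - 1)]
        _ ≤ (δ + s) ^ (p - 2) * s := mul_le_mul_of_nonneg_right hb1 hs0.le

lemma phi_lower_quad (p δ : ℝ) (hp : 1 < p) (hδ : 0 ≤ δ) {s : ℝ} (hs : 0 ≤ s) :
    kap p * ((δ + s) ^ (p - 2) * s ^ 2) ≤ phiFn p δ s := by
  rcases hs.eq_or_lt with h | h
  · rw [← h]; simp [phiFn]
  · have hkey : min 1 ((2:ℝ) ^ (2 - p)) * (δ + s) ^ (p - 2) ≤ (δ + s/2) ^ (p - 2) := by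
      rcases le_total p 2 with hp2 | hp2
      · calc min 1 ((2:ℝ) ^ (2-p)) * (δ + s) ^ (p-2) ≤ 1 * (δ + s) ^ (p-2) :=
              mul_le_mul_of_nonneg_right (min_le_left _ _) (Real.rpow_nonneg (by linarith) _)
          _ = (δ + s) ^ (p-2) := one_mul _
          _ ≤ (δ + s/2) ^ (p-2) :=
              Real.rpow_le_rpow_of_nonpos (by linarith) (by linarith) (by linarith)
      · calc min 1 ((2:ℝ) ^ (2-p)) * (δ + s) ^ (p-2)
            ≤ (2:ℝ) ^ (2-p) * (δ + s) ^ (p-2) :=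
              mul_le_mul_of_nonneg_right (min_le_right _ _) (Real.rpow_nonneg (by linarith) _)
          _ = ((δ + s)/2) ^ (p-2) := by
              rw [Real.div_rpow (by linarith) (by norm_num),
                show (2:ℝ) - p = -(p-2) from by ring, Real.rpow_neg (by norm_num)]
              ring
          _ ≤ (δ + s/2) ^ (p-2) :=
              Real.rpow_le_rpow (by positivity) (by linarith) (by linarith)
    have hφ := phiFn_ge p δ hp hδ hs
    have hg : gFn p δ (s/2) = (δ + s/2) ^ (p-2) * (s/2) := rfl
    calc kap p * ((δ + s) ^ (p - 2) * s ^ 2)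
        = (min 1 ((2:ℝ) ^ (2-p)) * (δ + s) ^ (p-2)) * (s/2) * (s/2) := by
          unfold kap; ring
      _ ≤ (δ + s/2) ^ (p-2) * (s/2) * (s/2) := by
          apply mul_le_mul_of_nonneg_right _ (by linarith)
          exact mul_le_mul_of_nonneg_right hkey (by linarith)
      _ = gFn p δ (s/2) * (s/2) := by rw [hg]
      _ ≤ phiFn p δ s := hφ

lemma key_upper (p δ : ℝ) (hp : 1 < p) (hδ : 0 ≤ δ) {t s : ℝ} (ht : 0 < t) (hs : 0 ≤ s) :
    s * t - phiFn p δ s ≤ Mc p * (δ ^ (p-1) + t) ^ (p/(p-1) - 2) * t ^ 2 := by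
  have hτb : (0:ℝ) ≤ δ ^ (p-1) + t := by
    have := Real.rpow_nonneg hδ (p-1); linarith
  have hpos : (0:ℝ) ≤ Mc p * (δ ^ (p-1) + t) ^ (p/(p-1) - 2) * t ^ 2 :=
    mul_nonneg (mul_nonneg (Mc_pos p).le (Real.rpow_nonneg hτb _)) (sq_nonneg t)
  rcases le_total s (Mc p * (δ ^ (p-1) + t) ^ (p/(p-1)-2) * t) with hc | hc
  · have h1 : s * t ≤ Mc p * (δ ^ (p-1)+t) ^ (p/(p-1)-2) * t * t :=
      mul_le_mul_of_nonneg_right hc ht.le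
    have h2 := phiFn_nonneg p δ hδ hs
    have h3 : Mc p * (δ ^ (p-1)+t) ^ (p/(p-1)-2) * t * t
        = Mc p * (δ ^ (p-1)+t) ^ (p/(p-1)-2) * t ^ 2 := by ring
    linarith
  · have h1 := key_ineq p δ hp hδ ht hc
    have h2 := phi_lower_quad p δ hp hδ hs
    have h3 : s * t ≤ phiFn p δ s := by
      calc s * t ≤ s * (kap p * ((δ+s)^(p-2)*s)) := mul_le_mul_of_nonneg_left h1 hs
        _ = kap p * ((δ+s)^(p-2)*s^2) := by ring
        _ ≤ phiFn p δ s := h2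
    linarith

noncomputable def Lc (p : ℝ) : ℝ :=
  min ((2:ℝ) ^ (1 - p)) (min ((8:ℝ) ^ (-(1 / (p - 1)))) ((2:ℝ) ^ (1 - p / (p - 1))))

lemma Lc_pos (p : ℝ) : 0 < Lc p :=
  lt_min (Real.rpow_pos_of_pos two_pos _)
    (lt_min (Real.rpow_pos_of_pos (by norm_num) _) (Real.rpow_pos_of_pos two_pos _))

lemma Lc_le_one (p : ℝ) (hp : 1 < p) : Lc p ≤ 1 :=
  (min_le_left _ _).trans
    (Real.rpow_le_one_of_one_le_of_nonpos (by norm_num) (by linarith))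

lemma key_lower (p δ : ℝ) (hp : 1 < p) (hδ : 0 ≤ δ) {t : ℝ} (ht : 0 < t) :
    gFn p δ (Lc p * (δ ^ (p-1) + t) ^ (p/(p-1) - 2) * t) ≤ t / 2 := by
  have hp1 : (0:ℝ) < p - 1 := by linarith
  have hL := Lc_pos p
  have hδp : (0:ℝ) ≤ δ ^ (p - 1) := Real.rpow_nonneg hδ _
  set τ := δ ^ (p - 1) + t with hτdef
  have hτ : 0 < τ := by linarith
  have hτq : (0:ℝ) < τ ^ (p / (p - 1) - 2) := Real.rpow_pos_of_pos hτ _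
  set s₀ := Lc p * τ ^ (p/(p-1) - 2) * t with hs₀def
  have hs₀ : 0 < s₀ := mul_pos (mul_pos hL hτq) ht
  have hqe : (p / (p - 1) - 2) * (p - 1) = 2 - p := by field_simp; ring
  have hg : gFn p δ s₀ = (δ + s₀) ^ (p - 2) * s₀ := rfl
  rcases le_total p 2 with hp2 | hp2
  · -- 1 < p ≤ 2
    have hq20 : (0:ℝ) ≤ p / (p - 1) - 2 := by
      rw [show p / (p-1) - 2 = (2-p)/(p-1) from by field_simp; ring]
      exact div_nonneg (by linarith) (by linarith)
    rcases le_total t (δ ^ (p-1)) with hcase | hcase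
    · -- t ≤ δ^(p-1)
      have hδ0 : 0 < δ := by
        rcases hδ.eq_or_lt with h | h
        · exfalso; rw [← h, Real.zero_rpow (by linarith : p - 1 ≠ 0)] at hcase; linarith
        · exact h
      have hδpp : (0:ℝ) < δ ^ (p-1) := Real.rpow_pos_of_pos hδ0 _
      have hb : (δ + s₀) ^ (p-2) ≤ δ ^ (p-2) :=
        Real.rpow_le_rpow_of_nonpos hδ0 (by linarith) (by linarith)
      have hτup : τ ^ (p/(p-1)-2) ≤ 2 ^ (p/(p-1)-2) * δ ^ (2-p) := by
        calc τ ^ (p/(p-1)-2) ≤ (2 * δ ^ (p-1)) ^ (p/(p-1)-2) :=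
              Real.rpow_le_rpow hτ.le (by linarith) hq20
          _ = 2 ^ (p/(p-1)-2) * δ ^ (2-p) := by
              rw [Real.mul_rpow (by norm_num) hδpp.le, ← Real.rpow_mul hδ0.le,
                show (p - 1) * (p / (p - 1) - 2) = 2 - p from by linear_combination hqe]
      have hδcancel : δ ^ (p - 2) * δ ^ (2 - p) = 1 := by
        rw [← Real.rpow_add hδ0]; norm_num
      have hL2 : Lc p * 2 ^ (p/(p-1)-2) ≤ 1/2 := by
        have h1 : Lc p ≤ (2:ℝ) ^ (1 - p/(p-1)) := (min_le_right _ _).trans (min_le_right _ _)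
        have h2 : (2:ℝ) ^ (1 - p/(p-1)) * 2 ^ (p/(p-1)-2) = 1/2 := by
          rw [← Real.rpow_add (by norm_num : (0:ℝ) < 2),
            show (1:ℝ) - p/(p-1) + (p/(p-1) - 2) = -1 from by ring, Real.rpow_neg_one]
          norm_num
        calc Lc p * 2 ^ (p/(p-1)-2) ≤ (2:ℝ) ^ (1 - p/(p-1)) * 2 ^ (p/(p-1)-2) :=
              mul_le_mul_of_nonneg_right h1 (Real.rpow_nonneg (by norm_num) _)
          _ = 1/2 := h2
      calc gFn p δ s₀ = (δ + s₀) ^ (p-2) * s₀ := hg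
        _ ≤ δ ^ (p-2) * s₀ := mul_le_mul_of_nonneg_right hb hs₀.le
        _ = δ ^ (p-2) * (Lc p * τ ^ (p/(p-1)-2) * t) := by rw [hs₀def]
        _ ≤ δ ^ (p-2) * (Lc p * (2 ^ (p/(p-1)-2) * δ ^ (2-p)) * t) := by
            apply mul_le_mul_of_nonneg_left _ (Real.rpow_nonneg hδ0.le _)
            apply mul_le_mul_of_nonneg_right _ ht.le
            exact mul_le_mul_of_nonneg_left (by linarith [hτup]) hL.le
        _ = (Lc p * 2 ^ (p/(p-1)-2)) * (δ ^ (p-2) * δ ^ (2-p)) * t := by ring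
        _ = (Lc p * 2 ^ (p/(p-1)-2)) * t := by rw [hδcancel, mul_one]
        _ ≤ (1/2) * t := mul_le_mul_of_nonneg_right hL2 ht.le
        _ = t / 2 := by ring
    · -- δ^(p-1) ≤ t, so τ ≤ 2t
      have hb : (δ + s₀) ^ (p-2) ≤ s₀ ^ (p-2) :=
        Real.rpow_le_rpow_of_nonpos hs₀ (by linarith) (by linarith)
      have hLp : Lc p ^ (p-1) ≤ 1/8 := by
        have h1 : Lc p ≤ (8:ℝ) ^ (-(1/(p-1))) := (min_le_right _ _).trans (min_le_left _ _)
        calc Lc p ^ (p-1) ≤ ((8:ℝ) ^ (-(1/(p-1)))) ^ (p-1) :=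
              Real.rpow_le_rpow hL.le h1 (by linarith)
          _ = (8:ℝ) ^ ((-(1/(p-1))) * (p-1)) := (Real.rpow_mul (by norm_num) _ _).symm
          _ = 1/8 := by
              rw [show (-(1/(p-1))) * (p-1) = -1 from by field_simp, Real.rpow_neg_one]
              norm_num
      have h2le : (2:ℝ) ^ (2-p) ≤ 2 := by
        calc (2:ℝ) ^ (2-p) ≤ (2:ℝ) ^ (1:ℝ) :=
              Real.rpow_le_rpow_of_exponent_le (by norm_num) (by linarith)
          _ = 2 := Real.rpow_one 2
      have hτ2 : τ ^ (2-p) ≤ 2 ^ (2-p) * t ^ (2-p) := by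
        rw [← Real.mul_rpow (by norm_num) ht.le]
        exact Real.rpow_le_rpow hτ.le (by linarith) (by linarith)
      have htt : t ^ (2 - p) * t ^ (p - 1) = t := by
        rw [← Real.rpow_add ht]; norm_num
      have hsp : s₀ ^ (p-1) = Lc p ^ (p-1) * (τ ^ (2-p) * t ^ (p-1)) := by
        rw [hs₀def, Real.mul_rpow (mul_nonneg hL.le hτq.le) ht.le,
          Real.mul_rpow hL.le hτq.le, ← Real.rpow_mul hτ.le, hqe]
        ring
      calc gFn p δ s₀ = (δ + s₀) ^ (p-2) * s₀ := hg
        _ ≤ s₀ ^ (p-2) * s₀ := mul_le_mul_of_nonneg_right hb hs₀.le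
        _ = s₀ ^ (p-1) := (rpow_split p s₀ hs₀).symm
        _ = Lc p ^ (p-1) * (τ ^ (2-p) * t ^ (p-1)) := hsp
        _ ≤ (1/8) * ((2 ^ (2-p) * t ^ (2-p)) * t ^ (p-1)) := by
            apply mul_le_mul hLp
            · exact mul_le_mul_of_nonneg_right hτ2 (Real.rpow_nonneg ht.le _)
            · exact mul_nonneg (Real.rpow_nonneg hτ.le _) (Real.rpow_nonneg ht.le _)
            · norm_num
        _ = (1/8) * (2 ^ (2-p) * (t ^ (2-p) * t ^ (p-1))) := by ring
        _ = (1/8) * (2 ^ (2-p) * t) := by rw [htt]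
        _ ≤ (1/8) * (2 * t) := by
            apply mul_le_mul_of_nonneg_left _ (by norm_num)
            exact mul_le_mul_of_nonneg_right h2le ht.le
        _ ≤ t / 2 := by linarith
  · -- 2 ≤ p
    have hq2le : p / (p - 1) - 2 ≤ 0 := by
      rw [show p / (p-1) - 2 = (2-p)/(p-1) from by field_simp; ring]
      exact div_nonpos_iff.mpr (Or.inr ⟨by linarith, by linarith⟩)
    have hδle : δ ≤ τ ^ (1/(p-1)) := by
      rcases hδ.eq_or_lt with h | h
      · rw [← h]; exact Real.rpow_nonneg hτ.le _
      · calc δ = (δ ^ (p-1)) ^ (1/(p-1)) := by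
              rw [← Real.rpow_mul h.le, mul_one_div_cancel (by linarith : p - 1 ≠ 0),
                Real.rpow_one]
          _ ≤ τ ^ (1/(p-1)) :=
              Real.rpow_le_rpow (Real.rpow_nonneg hδ _) (by linarith) (by positivity)
    have hs₀le : s₀ ≤ τ ^ (1/(p-1)) := by
      have h1 : τ ^ (p/(p-1)-2) * t ≤ τ ^ (1/(p-1)) := by
        calc τ ^ (p/(p-1)-2) * t ≤ τ ^ (p/(p-1)-2) * τ :=
              mul_le_mul_of_nonneg_left (by linarith) hτq.le
          _ = τ ^ (p/(p-1)-2+1) := (Real.rpow_add_one hτ.ne' _).symm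
          _ = τ ^ (1/(p-1)) := by
              congr 1; field_simp; ring
      calc s₀ = Lc p * (τ ^ (p/(p-1)-2) * t) := by rw [hs₀def]; ring
        _ ≤ 1 * (τ ^ (p/(p-1)-2) * t) :=
            mul_le_mul_of_nonneg_right (Lc_le_one p hp)
              (mul_nonneg hτq.le ht.le)
        _ = τ ^ (p/(p-1)-2) * t := one_mul _
        _ ≤ τ ^ (1/(p-1)) := h1
    have hτp : (0:ℝ) < τ ^ (1/(p-1)) := Real.rpow_pos_of_pos hτ _
    have hb : (δ + s₀) ^ (p-2) ≤ 2 ^ (p-2) * (τ ^ (1/(p-1))) ^ (p-2) := by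
      rw [← Real.mul_rpow (by norm_num) hτp.le]
      exact Real.rpow_le_rpow (by linarith) (by linarith) (by linarith)
    have hcancel : (τ ^ (1/(p-1))) ^ (p-2) * τ ^ (p/(p-1)-2) = 1 := by
      rw [← Real.rpow_mul hτ.le, ← Real.rpow_add hτ,
        show 1/(p-1) * (p-2) + (p/(p-1) - 2) = 0 from by field_simp; ring]
      exact Real.rpow_zero τ
    have hL2 : 2 ^ (p-2) * Lc p ≤ 1/2 := by
      have h1 : Lc p ≤ (2:ℝ) ^ (1-p) := min_le_left _ _
      calc 2 ^ (p-2) * Lc p ≤ 2 ^ (p-2) * (2:ℝ) ^ (1-p) :=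
            mul_le_mul_of_nonneg_left h1 (Real.rpow_nonneg (by norm_num) _)
        _ = (2:ℝ) ^ (p-2+(1-p)) := (Real.rpow_add (by norm_num) _ _).symm
        _ = 1/2 := by
            rw [show p-2+(1-p) = (-1:ℝ) from by ring, Real.rpow_neg_one]; norm_num
    calc gFn p δ s₀ = (δ + s₀) ^ (p-2) * s₀ := hg
      _ ≤ (2 ^ (p-2) * (τ ^ (1/(p-1))) ^ (p-2)) * s₀ :=
          mul_le_mul_of_nonneg_right hb hs₀.le
      _ = (2 ^ (p-2) * (τ ^ (1/(p-1))) ^ (p-2)) * (Lc p * τ ^ (p/(p-1)-2) * t) := by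
          rw [hs₀def]
      _ = (2 ^ (p-2) * Lc p) * ((τ ^ (1/(p-1))) ^ (p-2) * τ ^ (p/(p-1)-2)) * t := by
          ring
      _ = (2 ^ (p-2) * Lc p) * t := by rw [hcancel, mul_one]
      _ ≤ (1/2) * t := mul_le_mul_of_nonneg_right hL2 ht.le
      _ = t / 2 := by ring

theorem stmt6 (p δ : ℝ) (hp : 1 < p) (hδ : 0 ≤ δ) :
    ∃ c > (0:ℝ), ∃ C > (0:ℝ), ∀ t ≥ (0:ℝ),
      c * (δ ^ (p - 1) + t) ^ (p / (p - 1) - 2) * t ^ 2 ≤ fconj (phiFn p δ) t ∧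
      fconj (phiFn p δ) t ≤ C * (δ ^ (p - 1) + t) ^ (p / (p - 1) - 2) * t ^ 2 := by
  have hL := Lc_pos p
  refine ⟨Lc p / 2, by linarith, Mc p, Mc_pos p, ?_⟩
  intro t ht
  have hmem0 : (0:ℝ) ∈ (fun s => s * t - phiFn p δ s) '' Set.Ici 0 :=
    ⟨0, Set.mem_Ici.mpr le_rfl, by simp [phiFn]⟩
  have hne : ((fun s => s * t - phiFn p δ s) '' Set.Ici 0).Nonempty := ⟨0, hmem0⟩
  rcases ht.eq_or_lt with h0 | ht0
  · -- t = 0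
    subst h0
    have hbdd : BddAbove ((fun s => s * (0:ℝ) - phiFn p δ s) '' Set.Ici 0) := by
      refine ⟨0, ?_⟩
      rintro y ⟨s, hsmem, rfl⟩
      have := phiFn_nonneg p δ hδ (Set.mem_Ici.mp hsmem)
      simp only [mul_zero]
      linarith
    constructor
    · simp only [ne_eq, OfNat.ofNat_ne_zero, not_false_eq_true, zero_pow, mul_zero]
      exact le_csSup hbdd hmem0
    · simp only [ne_eq, OfNat.ofNat_ne_zero, not_false_eq_true, zero_pow, mul_zero]
      apply csSup_le hne
      rintro y ⟨s, hsmem, rfl⟩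
      have := phiFn_nonneg p δ hδ (Set.mem_Ici.mp hsmem)
      simp only [mul_zero]
      linarith
  · -- t > 0
    have hub : ∀ y ∈ (fun s => s * t - phiFn p δ s) '' Set.Ici 0,
        y ≤ Mc p * (δ ^ (p-1) + t) ^ (p/(p-1) - 2) * t ^ 2 := by
      rintro y ⟨s, hsmem, rfl⟩
      exact key_upper p δ hp hδ ht0 (Set.mem_Ici.mp hsmem)
    have hbdd : BddAbove ((fun s => s * t - phiFn p δ s) '' Set.Ici 0) := ⟨_, hub⟩
    constructor
    · -- lower bound
      have hτq : (0:ℝ) < (δ ^ (p-1) + t) ^ (p/(p-1) - 2) := by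
        apply Real.rpow_pos_of_pos
        have := Real.rpow_nonneg hδ (p-1); linarith
      set s₀ := Lc p * (δ ^ (p-1) + t) ^ (p/(p-1) - 2) * t with hs₀def
      have hs₀ : 0 < s₀ := mul_pos (mul_pos hL hτq) ht0
      have hφ : phiFn p δ s₀ ≤ gFn p δ s₀ * s₀ := phiFn_le p δ hp hδ hs₀.le
      have hgl := key_lower p δ hp hδ ht0
      have hval : Lc p / 2 * (δ ^ (p-1) + t) ^ (p/(p-1) - 2) * t ^ 2
          ≤ s₀ * t - phiFn p δ s₀ := by
        have h1 : gFn p δ s₀ * s₀ ≤ (t/2) * s₀ :=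
          mul_le_mul_of_nonneg_right hgl hs₀.le
        have h2 : s₀ * t - (t/2) * s₀ = Lc p / 2 * (δ ^ (p-1) + t) ^ (p/(p-1) - 2) * t ^ 2 := by
          rw [hs₀def]; ring
        linarith
      exact le_trans hval (le_csSup hbdd ⟨s₀, Set.mem_Ici.mpr hs₀.le, rfl⟩)
    · exact csSup_le hne hub
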